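/- Let Σ be a finite alphabet and f : Σ* → ℝ a function computed by some linear representation, and let r be the (finite) rank of the Hankel matrix of f. Let 𝒫, 𝒮 be finite sets of strings with λ ∈ 𝒫, λ ∈ 𝒮 and 𝒫 prefix-closed, and suppose the basis (𝒫, 𝒮) is complete, i.e., the finite sub-block H_B ∈ ℝ^{𝒫×𝒮} with entries H_B(u,v) = f(uv) has rank r. Let P ∈ ℝ^{𝒫×r} and S ∈ ℝ^{r×𝒮} be a rank factorization, H_B = P·S, and let P⁺ ∈ ℝ^{r×𝒫} and S⁺ ∈ ℝ^{𝒮×r} satisfy P⁺·P = I_r and S·S⁺ = I_r. Define, for each σ ∈ Σ, the matrix H_σ ∈ ℝ^{𝒫×𝒮} by H_σ(u,v) = f(uσv), the vector h_{𝒫,λ} ∈ ℝ^{𝒫} by h_{𝒫,λ}(u) = f(u), and the vector h_{λ,𝒮} ∈ ℝ^{𝒮} by h_{λ,𝒮}(v) = f(v). Then the r-dimensional linear representation A = ⟨β₀, (N_σ)_{σ∈Σ}, β∞⟩ given by β₀ᵀ = h_{λ,𝒮}ᵀ S⁺, β∞ = P⁺ h_{𝒫,λ}, and N_σ = P⁺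 H_σ S⁺ computes f: for every string w = σ₁…σₙ, β₀ᵀ N_{σ₁} ⋯ N_{σₙ} β∞ = f(w). In particular A is a minimal weighted automaton computing f. -/

import Mathlib

open Matrix

/-- The ordered product `M_w = M_{σ₁} ⋯ M_{σₙ}` for a string `w = σ₁…σₙ`. -/
def wordProd {Γ : Type*} {r : ℕ} (M : Γ → Matrix (Fin r) (Fin r) ℝ) (w : List Γ) :
    Matrix (Fin r) (Fin r) ℝ :=
  (w.map M).prod

/-- The rank of the Hankel matrix of `f`: the dimension of the span of its rows
`v ↦ f (u ++ v)` inside the space of functions `Γ* → ℝ`. -/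
noncomputable def hankelRank {Γ : Type*} (f : List Γ → ℝ) : Cardinal :=
  Module.rank ℝ
    ↥(Submodule.span ℝ (Set.range fun u : List Γ => fun v : List Γ => f (u ++ v)))

open Submodule Module

section
variable {E ι : Type*} [NormedAddCommGroup E] [InnerProductSpace ℝ E]

/-- pairing a vector against a family -/
def pairL (hh : ι → E) : E →ₗ[ℝ] (ι → ℝ) where
  toFun x := fun i => inner ℝ (hh i) x
  map_add' x y := by funext i; simp [inner_add_right]
  map_smul' c x := by funext i; simp [inner_smul_right]

@[simp] lemma pairL_apply (hh : ι → E) (x : E) (i : ι) :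
    pairL hh x i = inner ℝ (hh i) x := rfl

lemma ker_pairL (hh : ι → E) :
    LinearMap.ker (pairL hh) = (span ℝ (Set.range hh))ᗮ := by
  ext x
  simp only [LinearMap.mem_ker, Submodule.mem_orthogonal]
  constructor
  · intro hx u hu
    induction hu using Submodule.span_induction with
    | mem y hy =>
      obtain ⟨i, rfl⟩ := hy
      exact congrFun hx i
    | zero => simp
    | add y z _ _ hy hz => simp [inner_add_left, hy, hz]
    | smul c y _ hy => simp [inner_smul_left, hy]
  · intro hx
    funext i
    exact hx (hh i) (Submodule.subset_span (Set.mem_range_self i))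

lemma map_pairL_span (hh : ι → E) {κ : Type*} (gg : κ → E) :
    (span ℝ (Set.range gg)).map (pairL hh) = span ℝ (Set.range fun j => pairL hh (gg j)) := by
  rw [Submodule.map_span, ← Set.range_comp]
  rfl

lemma pairL_comp (hh : ι → E) {ι' : Type*} (inj : ι' → ι) :
    pairL (fun i' => hh (inj i')) = (LinearMap.funLeft ℝ ℝ inj).comp (pairL hh) := rfl

end

lemma finrank_map_add_finrank_inf_ker {K V W : Type*} [Field K] [AddCommGroup V] [Module K V]
    [AddCommGroup W] [Module K W] (φ : V →ₗ[K] W) (p : Submodule K V)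
    [FiniteDimensional K p] :
    finrank K (p.map φ) + finrank K (p ⊓ LinearMap.ker φ : Submodule K V) = finrank K p := by
  have h1 : p.map φ = LinearMap.range (φ.comp p.subtype) := by
    rw [LinearMap.range_comp, Submodule.range_subtype]
  have h2 : LinearMap.ker (φ.comp p.subtype) = Submodule.comap p.subtype (LinearMap.ker φ) := by
    rw [LinearMap.ker_comp]
  have h3 : finrank K (Submodule.comap p.subtype (LinearMap.ker φ))
      = finrank K (p ⊓ LinearMap.ker φ : Submodule K V) := by
    rw [inf_comm]
    have h0 : Submodule.comap p.subtype (LinearMap.ker φ)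
        = Submodule.comap p.subtype (LinearMap.ker φ ⊓ p) := by
      ext x; simp [x.2]
    rw [h0]
    exact (Submodule.comapSubtypeEquivOfLe (inf_le_right : LinearMap.ker φ ⊓ p ≤ p)).finrank_eq
  rw [h1, ← h3, ← h2]
  exact LinearMap.finrank_range_add_finrank_ker (φ.comp p.subtype)

lemma euclid_key {E : Type*} [NormedAddCommGroup E] [InnerProductSpace ℝ E]
    [FiniteDimensional ℝ E] (F W : Submodule ℝ E) :
    finrank ℝ (W.map Fᗮ.mkQ) = finrank ℝ (F.map Wᗮ.mkQ) := by
  have a1 := finrank_map_add_finrank_inf_ker Fᗮ.mkQ W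
  have a2 := finrank_map_add_finrank_inf_ker Wᗮ.mkQ F
  rw [Submodule.ker_mkQ] at a1 a2
  have a3 := Submodule.finrank_sup_add_finrank_inf_eq W Fᗮ
  have hWF : W ⊔ Fᗮ = (Wᗮ ⊓ F)ᗮ := by
    have h := Submodule.inf_orthogonal W Fᗮ
    rw [Submodule.orthogonal_orthogonal] at h
    rw [h]
    exact (Submodule.orthogonal_orthogonal _).symm
  have a4 := Submodule.finrank_add_finrank_orthogonal (Wᗮ ⊓ F)
  have a5 := Submodule.finrank_add_finrank_orthogonal F
  have a6 : finrank ℝ (F ⊓ Wᗮ : Submodule ℝ E) = finrank ℝ (Wᗮ ⊓ F : Submodule ℝ E) := by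
    rw [inf_comm]
  rw [hWF] at a3
  omega

/-- The core extraction lemma -/
lemma core_lemma {Γ : Type*} (f : List Γ → ℝ) {d : ℕ}
    (g h : List Γ → EuclideanSpace ℝ (Fin d))
    (hsplit : ∀ u v : List Γ, f (u ++ v) = inner ℝ (g u) (h v))
    (r : ℕ) (hr : hankelRank f = r)
    (Pb Sb : Finset (List Γ))
    (hcomplete : (Matrix.of fun (u : ↥Pb) (v : ↥Sb) => f (u.1 ++ v.1)).rank = r) :
    (∀ w : List Γ, ∃ c : ↥Pb → ℝ, ∀ v : ↥Sb,
        f (w ++ v.1) = ∑ u : ↥Pb, c u * f (u.1 ++ v.1)) ∧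
    (∀ s : List Γ, ∃ dd : ↥Sb → ℝ, ∀ u' : List Γ,
        f (u' ++ s) = ∑ v : ↥Sb, f (u' ++ v.1) * dd v) := by
  classical
  set F : Submodule ℝ (EuclideanSpace ℝ (Fin d)) := span ℝ (Set.range g) with hF
  set W : Submodule ℝ (EuclideanSpace ℝ (Fin d)) := span ℝ (Set.range h) with hW
  set FP : Submodule ℝ (EuclideanSpace ℝ (Fin d)) := span ℝ (Set.range fun u : ↥Pb => g u.1) with hFP
  set WS : Submodule ℝ (EuclideanSpace ℝ (Fin d)) := span ℝ (Set.range fun v : ↥Sb => h v.1) with hWS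
  set T : EuclideanSpace ℝ (Fin d) →ₗ[ℝ] (List Γ → ℝ) := pairL h with hT
  set U : EuclideanSpace ℝ (Fin d) →ₗ[ℝ] (List Γ → ℝ) := pairL g with hU
  set Tp : EuclideanSpace ℝ (Fin d) →ₗ[ℝ] (↥Sb → ℝ) := pairL (fun v : ↥Sb => h v.1) with hTp
  set Up : EuclideanSpace ℝ (Fin d) →ₗ[ℝ] (↥Pb → ℝ) := pairL (fun u : ↥Pb => g u.1) with hUp
  set HB : Matrix ↥Pb ↥Sb ℝ := Matrix.of fun (u : ↥Pb) (v : ↥Sb) => f (u.1 ++ v.1) with hHB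
  -- the row span of the full Hankel matrix is `map T F`
  have hfg : (fun u : List Γ => fun v : List Γ => f (u ++ v)) = fun u => T (g u) := by
    funext u v
    show f (u ++ v) = inner ℝ (h v) (g u)
    rw [hsplit, real_inner_comm]
  have hrowspan : span ℝ (Set.range fun u : List Γ => fun v : List Γ => f (u ++ v))
      = F.map T := by
    rw [hfg, hF, hT, map_pairL_span]
  have hrankTF : Module.rank ℝ (F.map T) = r := by rw [← hrowspan, ← hankelRank]; exact hr
  have hfinTF : FiniteDimensional ℝ (F.map T) := Module.finite_of_rank_eq_nat hrankTF
  have hfrTF : finrank ℝ (F.map T) = r := finrank_eq_of_rank_eq hrankTF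
  -- the columns of HB span `map Up WS`, rows span `map Tp FP`
  have hHBt : HBᵀ = fun v : ↥Sb => Up (h v.1) := by
    funext v u
    show f (u.1 ++ v.1) = inner ℝ (g u.1) (h v.1)
    exact hsplit _ _
  have hcols : HB.rank = finrank ℝ (WS.map Up) := by
    rw [Matrix.rank_eq_finrank_span_cols]
    show finrank ℝ (span ℝ (Set.range (HBᵀ : ↥Sb → ↥Pb → ℝ))) = _
    rw [hHBt, hWS, hUp, map_pairL_span]
  have hHBr : HBᵀᵀ = fun u : ↥Pb => Tp (g u.1) := by
    funext u v
    show f (u.1 ++ v.1) = inner ℝ (h v.1) (g u.1)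
    rw [hsplit, real_inner_comm]
  have hrows : HB.rank = finrank ℝ (FP.map Tp) := by
    rw [← Matrix.rank_transpose, Matrix.rank_eq_finrank_span_cols]
    show finrank ℝ (span ℝ (Set.range (HBᵀᵀ : ↥Pb → ↥Sb → ℝ))) = _
    rw [hHBr, hFP, hTp,
      map_pairL_span]
  -- step A: the rows over Pb span the whole restricted row space
  have hFPle : FP ≤ F := span_mono (by rintro _ ⟨u, rfl⟩; exact ⟨u.1, rfl⟩)
  have hWSle : WS ≤ W := span_mono (by rintro _ ⟨v, rfl⟩; exact ⟨v.1, rfl⟩)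
  have hTpcomp : Tp = (LinearMap.funLeft ℝ ℝ (Subtype.val : ↥Sb → List Γ)).comp T := by
    rw [hTp, hT]; exact pairL_comp h _
  have hmapTpF_le : finrank ℝ (F.map Tp) ≤ r := by
    rw [hTpcomp, Submodule.map_comp]
    calc finrank ℝ ((F.map T).map (LinearMap.funLeft ℝ ℝ (Subtype.val : ↥Sb → List Γ)))
        ≤ finrank ℝ (F.map T) := Submodule.finrank_map_le _ _
      _ = r := hfrTF
  have hfrFP : finrank ℝ (FP.map Tp) = r := by rw [← hrows, hcomplete]
  have hstepA : FP.map Tp = F.map Tp := by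
    apply Submodule.eq_of_le_of_finrank_le (Submodule.map_mono hFPle)
    rw [hfrFP]; exact hmapTpF_le
  -- step B: `W ≤ WS ⊔ Fᗮ`
  have hkerT : LinearMap.ker T = Wᗮ := by rw [hT, ker_pairL, hW]
  have hfrWm : finrank ℝ (F.map Wᗮ.mkQ) = r := by
    have b1 := finrank_map_add_finrank_inf_ker Wᗮ.mkQ F
    have b2 := finrank_map_add_finrank_inf_ker T F
    rw [Submodule.ker_mkQ] at b1
    rw [hkerT] at b2
    omega
  have hek := euclid_key F W
  have hkerUp : Fᗮ ≤ LinearMap.ker Up := by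
    rw [hUp, ker_pairL]
    exact Submodule.orthogonal_le hFPle
  have hUpfactor : finrank ℝ (WS.map Up) ≤ finrank ℝ (WS.map Fᗮ.mkQ) := by
    have hfac : Up = (Fᗮ.liftQ Up hkerUp).comp Fᗮ.mkQ := (Submodule.liftQ_mkQ Fᗮ Up hkerUp).symm
    rw [hfac, Submodule.map_comp]
    exact Submodule.finrank_map_le _ _
  have hstepB : WS.map Fᗮ.mkQ = W.map Fᗮ.mkQ := by
    apply Submodule.eq_of_le_of_finrank_le (Submodule.map_mono hWSle)
    rw [hek, hfrWm]
    calc r = finrank ℝ (WS.map Up) := by rw [← hcols, hcomplete]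
      _ ≤ _ := hUpfactor
  have hWle : W ≤ WS ⊔ Fᗮ := by
    intro y hy
    have hmem : Fᗮ.mkQ y ∈ WS.map Fᗮ.mkQ := hstepB ▸ Submodule.mem_map_of_mem hy
    obtain ⟨y', hy'WS, hy'⟩ := hmem
    have hzz : y - y' ∈ Fᗮ := by
      have h0 : Fᗮ.mkQ (y - y') = 0 := by rw [map_sub, hy', sub_self]
      rwa [← LinearMap.mem_ker, Submodule.ker_mkQ] at h0
    have hyy : y = y' + (y - y') := by abel
    rw [hyy]
    exact Submodule.add_mem _ (Submodule.mem_sup_left hy'WS) (Submodule.mem_sup_right hzz)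
  constructor
  · -- L1
    intro w
    have hmem : Tp (g w) ∈ F.map Tp := ⟨g w, subset_span ⟨w, rfl⟩, rfl⟩
    rw [← hstepA] at hmem
    obtain ⟨x', hx'FP, hx'⟩ := hmem
    obtain ⟨c, hc⟩ := (mem_span_range_iff_exists_fun ℝ).mp hx'FP
    refine ⟨c, fun v => ?_⟩
    have e1 : Tp (g w) v = f (w ++ v.1) := by
      show inner ℝ (h v.1) (g w) = f (w ++ v.1)
      rw [hsplit w v.1]
      exact real_inner_comm _ _
    have e2 : Tp x' v = ∑ u : ↥Pb, c u * f (u.1 ++ v.1) := by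
      rw [← hc]
      show inner ℝ (h v.1) (∑ u : ↥Pb, c u • g u.1) = _
      rw [inner_sum]
      refine Finset.sum_congr rfl fun u _ => ?_
      rw [real_inner_smul_right, real_inner_comm, ← hsplit]
    rw [← e1, ← hx', e2]
  · -- L2
    intro s
    have hs : h s ∈ WS ⊔ Fᗮ := hWle (subset_span ⟨s, rfl⟩)
    rw [Submodule.mem_sup] at hs
    obtain ⟨y, hyWS, z, hz, hyz⟩ := hs
    obtain ⟨dd, hdd⟩ := (mem_span_range_iff_exists_fun ℝ).mp hyWS
    refine ⟨dd, fun u' => ?_⟩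
    rw [hsplit u' s, ← hyz, inner_add_right]
    have e2 : (inner ℝ (g u') z : ℝ) = 0 :=
      (Submodule.mem_orthogonal _ _).mp hz (g u') (subset_span ⟨u', rfl⟩)
    rw [e2, add_zero, ← hdd, inner_sum]
    refine Finset.sum_congr rfl fun v _ => ?_
    rw [real_inner_smul_right, ← hsplit, mul_comm]


lemma wordProd_append' {Γ : Type*} {r : ℕ} (M : Γ → Matrix (Fin r) (Fin r) ℝ)
    (u v : List Γ) : wordProd M (u ++ v) = wordProd M u * wordProd M v := by
  simp [wordProd]

/-- the canonical identification of `Fin d → ℝ` with `EuclideanSpace ℝ (Fin d)` -/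
noncomputable def toE {d : ℕ} (x : Fin d → ℝ) : EuclideanSpace ℝ (Fin d) :=
  (WithLp.equiv 2 (Fin d → ℝ)).symm x

lemma rep_split {Γ : Type*} (f : List Γ → ℝ) {d : ℕ} (α₀ αω : Fin d → ℝ)
    (M : Γ → Matrix (Fin d) (Fin d) ℝ)
    (hf : ∀ w : List Γ, f w = α₀ ⬝ᵥ (wordProd M w).mulVec αω) (u v : List Γ) :
    f (u ++ v) = inner ℝ (toE (vecMul α₀ (wordProd M u)))
      (toE ((wordProd M v).mulVec αω)) := by
  rw [hf, wordProd_append', ← Matrix.mulVec_mulVec, Matrix.dotProduct_mulVec]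
  simp [toE, dotProduct, PiLp.inner_apply, RCLike.inner_apply, starRingEnd_apply, mul_comm]

lemma hankelRank_le {Γ : Type*} (f : List Γ → ℝ) {d : ℕ}
    (g h : List Γ → EuclideanSpace ℝ (Fin d))
    (hsplit : ∀ u v : List Γ, f (u ++ v) = inner ℝ (g u) (h v)) :
    hankelRank f ≤ d := by
  have hfg : (fun u : List Γ => fun v : List Γ => f (u ++ v)) = fun u => pairL h (g u) := by
    funext u v
    show f (u ++ v) = inner ℝ (h v) (g u)
    rw [hsplit, real_inner_comm]
  rw [hankelRank, hfg,
    show span ℝ (Set.range fun u => pairL h (g u)) = (span ℝ (Set.range g)).map (pairL h) from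
      (map_pairL_span h g).symm]
  have h1 := lift_rank_map_le (pairL h) (span ℝ (Set.range g))
  have h2 : Module.rank ℝ (span ℝ (Set.range g)) ≤ (d : Cardinal) := by
    refine (Submodule.rank_le _).trans ?_
    rw [← finrank_eq_rank, finrank_euclideanSpace_fin]
  have h3 := h1.trans (Cardinal.lift_le.mpr h2)
  simpa using h3


theorem statement9 {Γ : Type*} [Fintype Γ] (f : List Γ → ℝ)
    -- `f` is computed by some linear representation
    (d : ℕ) (α₀ αω : Fin d → ℝ) (M : Γ → Matrix (Fin d) (Fin d) ℝ)
    (hf : ∀ w : List Γ, f w = α₀ ⬝ᵥ (wordProd M w).mulVec αω)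
    -- `r` is the (finite) rank of the Hankel matrix of `f`
    (r : ℕ) (hr : hankelRank f = r)
    -- the basis `(Pb, Sb)`
    (Pb Sb : Finset (List Γ))
    (hPε : [] ∈ Pb) (hSε : [] ∈ Sb)
    (hprefix : ∀ w ∈ Pb, ∀ u : List Γ, u <+: w → u ∈ Pb)
    -- completeness: the sub-block has rank `r`
    (hcomplete : (Matrix.of fun (u : ↥Pb) (v : ↥Sb) => f (u.1 ++ v.1)).rank = r)
    -- rank factorization `H_B = P * S` with one-sided inverses
    (P : Matrix ↥Pb (Fin r) ℝ) (S : Matrix (Fin r) ↥Sb ℝ)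
    (hPS : (Matrix.of fun (u : ↥Pb) (v : ↥Sb) => f (u.1 ++ v.1)) = P * S)
    (Pp : Matrix (Fin r) ↥Pb ℝ) (hPp : Pp * P = 1)
    (Sp : Matrix ↥Sb (Fin r) ℝ) (hSp : S * Sp = 1) :
    -- the extracted representation
    (∀ w : List Γ,
      (Matrix.vecMul (fun v : ↥Sb => f v.1) Sp) ⬝ᵥ
        (wordProd
            (fun σ => Pp * (Matrix.of fun (u : ↥Pb) (v : ↥Sb) => f (u.1 ++ σ :: v.1)) * Sp)
            w).mulVec
          (Pp.mulVec fun u : ↥Pb => f u.1) = f w) ∧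
    -- minimality: no representation of dimension smaller than `r` computes `f`
    (∀ (r' : ℕ) (β₀ βω : Fin r' → ℝ) (M' : Γ → Matrix (Fin r') (Fin r') ℝ),
      (∀ w : List Γ, f w = β₀ ⬝ᵥ (wordProd M' w).mulVec βω) → r ≤ r') := by
    classical
  have hsplit : ∀ u v : List Γ, f (u ++ v) = inner ℝ (toE (vecMul α₀ (wordProd M u)))
      (toE ((wordProd M v).mulVec αω)) := fun u v => rep_split f α₀ αω M hf u v
  obtain ⟨L1, L2⟩ := core_lemma f _ _ hsplit r hr Pb Sb hcomplete
  choose dd hdd using L2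
  constructor
  · -- the extracted representation computes `f`
    have L1' : ∀ w : List Γ, ∃ x : Fin r → ℝ,
        (fun v : ↥Sb => f (w ++ v.1)) = vecMul x S := by
      intro w
      obtain ⟨c, hc⟩ := L1 w
      refine ⟨vecMul c P, ?_⟩
      funext v
      rw [hc v, Matrix.vecMul_vecMul, ← hPS]
      simp [Matrix.vecMul, dotProduct]
    have hrowS : ∀ w : List Γ,
        vecMul (fun v : ↥Sb => f (w ++ v.1)) (Sp * S) = fun v : ↥Sb => f (w ++ v.1) := by
      intro w
      obtain ⟨x, hx⟩ := L1' w
      rw [hx, Matrix.vecMul_vecMul, ← Matrix.mul_assoc, hSp, Matrix.one_mul]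
    set N : Γ → Matrix (Fin r) (Fin r) ℝ :=
      fun σ => Pp * (Matrix.of fun (u : ↥Pb) (v : ↥Sb) => f (u.1 ++ σ :: v.1)) * Sp with hN
    set D : Γ → Matrix ↥Sb ↥Sb ℝ :=
      fun σ => Matrix.of fun (v' v : ↥Sb) => dd (σ :: v.1) v' with hD
    have hHσ : ∀ σ : Γ, (Matrix.of fun (u : ↥Pb) (v : ↥Sb) => f (u.1 ++ σ :: v.1))
        = (Matrix.of fun (u : ↥Pb) (v : ↥Sb) => f (u.1 ++ v.1)) * D σ := by
      intro σ; ext u v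
      rw [Matrix.mul_apply]
      exact hdd (σ :: v.1) u.1
    have hrowD : ∀ (w : List Γ) (σ : Γ), (fun v : ↥Sb => f ((w ++ [σ]) ++ v.1))
        = vecMul (fun v : ↥Sb => f (w ++ v.1)) (D σ) := by
      intro w σ; funext v
      rw [show (w ++ [σ]) ++ v.1 = w ++ (σ :: v.1) by simp]
      rw [hdd (σ :: v.1) w]
      simp [Matrix.vecMul, dotProduct, hD]
    set β₀ : Fin r → ℝ := vecMul (fun v : ↥Sb => f v.1) Sp with hβ
    have main : ∀ w : List Γ,
        vecMul β₀ (wordProd N w) = vecMul (fun v : ↥Sb => f (w ++ v.1)) Sp := by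
      intro w
      induction w using List.reverseRecOn with
      | nil =>
        simp only [wordProd, List.map_nil, List.prod_nil, Matrix.vecMul_one]
        rfl
      | append_singleton w σ ih =>
        rw [wordProd_append', show wordProd N [σ] = N σ by simp [wordProd],
          ← Matrix.vecMul_vecMul, ih]
        simp only [hN]
        rw [hHσ σ, hPS, Matrix.vecMul_vecMul]
        have e : Sp * (Pp * ((P * S) * D σ) * Sp) = (Sp * S) * (D σ * Sp) := by
          simp only [← Matrix.mul_assoc]
          rw [Matrix.mul_assoc Sp Pp P, hPp, Matrix.mul_one]
        rw [e, ← Matrix.vecMul_vecMul, hrowS w, ← Matrix.vecMul_vecMul, ← hrowD w σ]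
    intro w
    rw [Matrix.dotProduct_mulVec, main w]
    have hhP : (fun u : ↥Pb => f u.1)
        = (Matrix.of fun (u : ↥Pb) (v : ↥Sb) => f (u.1 ++ v.1)).mulVec (dd []) := by
      funext u
      have h0 := hdd [] u.1
      rw [List.append_nil] at h0
      rw [h0]
      simp [Matrix.mulVec, dotProduct]
    rw [hhP, Matrix.mulVec_mulVec, Matrix.dotProduct_mulVec, Matrix.vecMul_vecMul, hPS]
    have e2 : Sp * (Pp * (P * S)) = Sp * S := by
      rw [← Matrix.mul_assoc Pp P, hPp, Matrix.one_mul]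
    rw [e2, hrowS w]
    have h0 := hdd [] w
    rw [List.append_nil] at h0
    exact ((congrArg id h0).symm : _)
  · -- minimality
    intro r' β₀' βω' M' hf'
    have hle := hankelRank_le f (fun u => toE (vecMul β₀' (wordProd M' u)))
      (fun v => toE ((wordProd M' v).mulVec βω'))
      (fun u v => rep_split f β₀' βω' M' hf' u v)
    rw [hr] at hle
    exact_mod_cast hle
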